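/- arXiv:1807.02741 — 5 statements merged into one kernel-verified Lean document; each statement's English description precedes it below -/
import Mathlib

section
/- A simplicial complex Δ on [n] is a disjoint union of simplices (equivalently, has pairwise disjoint facets) if and only if (1) every minimal non-face of Δ has exactly two elements, and (2) whenever {i,j} is a minimal non-face, then for every k ∈ [n] that is a vertex of Δ, at least one of {i,k} or {j,k} is a minimal non-face. -/
/-- σ is a minimal non-face of Δ. -/
def minNonface (n : ℕ) (Δ : Set (Finset (Fin n))) (σ : Finset (Fin n)) : Prop :=
  σ ∉ Δ ∧ ∀ τ ⊂ σ, τ ∈ Δ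

/-- A simplicial complex on [n] (all singletons faces) has pairwise disjoint
facets iff (1) every minimal non-face has exactly two elements, and (2) whenever
{i,j} is a minimal non-face, then for every k at least one of {i,k}, {j,k}
is a minimal non-face. -/
theorem stmt8 (n : ℕ) (Δ : Set (Finset (Fin n)))
    (hΔ : ∀ σ ∈ Δ, ∀ τ ⊆ σ, τ ∈ Δ)
    (hvert : ∀ i : Fin n, ({i} : Finset (Fin n)) ∈ Δ)
    (hne : (∅ : Finset (Fin n)) ∈ Δ) :
    (∀ F ∈ Δ, ∀ G ∈ Δ, (∀ c ∈ Δ, F ⊆ c → F = c) → (∀ c ∈ Δ, G ⊆ c → G = c) →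
        F ≠ G → Disjoint F G) ↔
    ((∀ σ, minNonface n Δ σ → σ.card = 2) ∧
      (∀ i j : Fin n, minNonface n Δ {i, j} → ∀ k : Fin n,
        minNonface n Δ {i, k} ∨ minNonface n Δ {j, k})) := by
  classical
  have pairMNF : ∀ a b : Fin n, ({a, b} : Finset (Fin n)) ∉ Δ →
      minNonface n Δ {a, b} := by
    intro a b hab
    refine ⟨hab, fun τ hτ => ?_⟩
    have hc : τ.card < ({a, b} : Finset (Fin n)).card := Finset.card_lt_card hτ
    have h2 : ({a, b} : Finset (Fin n)).card ≤ 2 := by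
      have := Finset.card_insert_le a ({b} : Finset (Fin n))
      simpa using this
    have h1 : τ.card ≤ 1 := by omega
    interval_cases h : τ.card
    · rw [Finset.card_eq_zero] at h; subst h; exact hne
    · obtain ⟨c, rfl⟩ := Finset.card_eq_one.mp h; exact hvert c
  constructor
  · intro h
    -- every face is contained in a facet
    have exF : ∀ σ ∈ Δ, ∃ F, F ∈ Δ ∧ σ ⊆ F ∧ ∀ c ∈ Δ, F ⊆ c → F = c := by
      intro σ hσ
      obtain ⟨F, hF, hmax⟩ := Set.Finite.exists_maximalFor id {c | c ∈ Δ ∧ σ ⊆ c}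
        (Set.toFinite _) ⟨σ, hσ, subset_rfl⟩
      exact ⟨F, hF.1, hF.2, fun c hc hFc => Finset.Subset.antisymm hFc (hmax ⟨hc, hF.2.trans hFc⟩ hFc)⟩
    -- uniqueness of the facet containing a vertex
    have uniq : ∀ F G, F ∈ Δ → G ∈ Δ → (∀ c ∈ Δ, F ⊆ c → F = c) →
        (∀ c ∈ Δ, G ⊆ c → G = c) → ∀ x : Fin n, x ∈ F → x ∈ G → F = G := by
      intro F G hF hG hFm hGm x hxF hxG
      by_contra hne'
      exact Finset.disjoint_left.mp (h F hF G hG hFm hGm hne') hxF hxG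
    refine ⟨?_, ?_⟩
    · rintro σ ⟨hσn, hσmin⟩
      have h0 : σ.card ≠ 0 := by
        intro e
        exact hσn (Finset.card_eq_zero.mp e ▸ hne)
      have h1 : σ.card ≠ 1 := by
        intro e
        obtain ⟨a, rfl⟩ := Finset.card_eq_one.mp e
        exact hσn (hvert a)
      have h3 : ¬ 3 ≤ σ.card := by
        intro h3
        obtain ⟨i, hi⟩ := Finset.card_pos.mp (show 0 < σ.card by omega)
        obtain ⟨F, hF, hiF, hFm⟩ := exF {i} (hvert i)
        have hσF : σ ⊆ F := by
          intro x hx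
          have hpair : ({i, x} : Finset (Fin n)) ⊂ σ := by
            refine Finset.ssubset_iff_subset_ne.mpr ⟨?_, ?_⟩
            · intro y hy
              simp only [Finset.mem_insert, Finset.mem_singleton] at hy
              rcases hy with rfl | rfl <;> assumption
            · intro e
              have : ({i, x} : Finset (Fin n)).card ≤ 2 := by
                have := Finset.card_insert_le i ({x} : Finset (Fin n))
                simpa using this
              rw [e] at this; omega
          have hpΔ : ({i, x} : Finset (Fin n)) ∈ Δ := hσmin _ hpair
          obtain ⟨H, hH, hpH, hHm⟩ := exF _ hpΔ
          have hFH : F = H := uniq F H hF hH hFm hHm i (hiF (by simp))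
            (hpH (by simp))
          rw [hFH]
          exact hpH (by simp)
        exact hσn (hΔ F hF σ hσF)
      omega
    · rintro i j ⟨hijn, hijmin⟩ k
      have hij : i ≠ j := by
        rintro rfl
        exact hijn (by simpa using hvert i)
      by_cases hki : k = i
      · subst hki
        exact Or.inr (by rw [Finset.pair_comm]; exact ⟨hijn, hijmin⟩)
      by_cases hkj : k = j
      · subst hkj
        exact Or.inl ⟨hijn, hijmin⟩
      by_cases hik : ({i, k} : Finset (Fin n)) ∈ Δ
      · by_cases hjk : ({j, k} : Finset (Fin n)) ∈ Δ
        · exfalso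
          obtain ⟨H, hH, hikH, hHm⟩ := exF _ hik
          obtain ⟨H', hH', hjkH', hH'm⟩ := exF _ hjk
          have : H = H' := uniq H H' hH hH' hHm hH'm k (hikH (by simp)) (hjkH' (by simp))
          subst this
          refine hijn (hΔ H hH _ ?_)
          intro y hy
          simp only [Finset.mem_insert, Finset.mem_singleton] at hy
          rcases hy with rfl | rfl
          · exact hikH (by simp)
          · exact hjkH' (by simp)
        · exact Or.inr (pairMNF j k hjk)
      · exact Or.inl (pairMNF i k hik)
  · rintro ⟨h1, h2⟩ F hF G hG hFm hGm hne' 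
    by_contra hd
    obtain ⟨x, hxF, hxG⟩ := Finset.not_disjoint_iff.mp hd
    -- flag property
    have flag : ∀ σ : Finset (Fin n),
        (∀ a ∈ σ, ∀ b ∈ σ, ({a, b} : Finset (Fin n)) ∈ Δ) → σ ∈ Δ := by
      intro σ hσ
      by_contra hσn
      set S : Finset (Finset (Fin n)) := σ.powerset.filter (· ∉ Δ) with hS
      have hσS : σ ∈ S := by simp [hS, hσn]
      obtain ⟨τ, hτS, hτmin⟩ := S.exists_minimal ⟨σ, hσS⟩
      simp only [hS, Finset.mem_filter, Finset.mem_powerset] at hτS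
      have hmnf : minNonface n Δ τ := by
        refine ⟨hτS.2, fun ρ hρ => ?_⟩
        by_contra hρn
        exact (not_subset_of_ssubset hρ) (hτmin (by simp [hS, hρ.subset.trans hτS.1, hρn]) hρ.subset)
      have := h1 τ hmnf
      obtain ⟨a, b, hab, rfl⟩ := Finset.card_eq_two.mp this
      exact hτS.2 (hσ a (hτS.1 (by simp)) b (hτS.1 (by simp)))
    have hFG : F ∪ G ∈ Δ := by
      refine flag _ ?_
      intro a ha b hb
      simp only [Finset.mem_union] at ha hb
      have key : ∀ a b : Fin n, a ∈ F → b ∈ G → ({a, b} : Finset (Fin n)) ∈ Δ := by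
        intro a b haF hbG
        by_contra hab
        have hax : ({a, x} : Finset (Fin n)) ∈ Δ := by
          refine hΔ F hF _ ?_
          intro y hy
          simp only [Finset.mem_insert, Finset.mem_singleton] at hy
          rcases hy with rfl | rfl <;> assumption
        have hbx : ({b, x} : Finset (Fin n)) ∈ Δ := by
          refine hΔ G hG _ ?_
          intro y hy
          simp only [Finset.mem_insert, Finset.mem_singleton] at hy
          rcases hy with rfl | rfl <;> assumption
        rcases h2 a b (pairMNF a b hab) x with hm | hm
        · exact hm.1 hax
        · exact hm.1 hbx
      rcases ha with ha | ha <;> rcases hb with hb | hb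
      · refine hΔ F hF _ ?_
        intro y hy
        simp only [Finset.mem_insert, Finset.mem_singleton] at hy
        rcases hy with rfl | rfl <;> assumption
      · exact key a b ha hb
      · rw [Finset.pair_comm]; exact key b a hb ha
      · refine hΔ G hG _ ?_
        intro y hy
        simp only [Finset.mem_insert, Finset.mem_singleton] at hy
        rcases hy with rfl | rfl <;> assumption
    have e1 : F = F ∪ G := hFm _ hFG Finset.subset_union_left
    have e2 : G = F ∪ G := hGm _ hFG Finset.subset_union_right
    exact hne' (e1.trans e2.symm)
end

section
/- Let U₁,…,U_n be open subsets of a topological space, σ ⊆ [n], τ disjoint from σ, with U_σ ⊆ ∪_{i∈τ} U_i and U_σ ∩ U_i ≠ ∅ for all i ∈ τ. Define the graph G on vertex set τ with edges (i,j) whenever U_σ ∩ U_i ∩ U_j ≠ ∅. If G is disconnected, then U_σ is disconnected. -/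
/-- If the graph G on τ with edges (i,j) whenever U_σ ∩ U_i ∩ U_j ≠ ∅ is
disconnected, and U_σ is covered by the U_i (i ∈ τ), each meeting U_σ, then
U_σ is disconnected. -/
theorem stmt11 {X : Type*} [TopologicalSpace X] (n : ℕ) (U : Fin n → Set X)
    (hopen : ∀ k, IsOpen (U k)) (σ τ : Finset (Fin n)) (hdisj : Disjoint σ τ)
    (hcov : (⋂ k ∈ σ, U k) ⊆ ⋃ i ∈ τ, U i)
    (hne : ∀ i ∈ τ, ((⋂ k ∈ σ, U k) ∩ U i).Nonempty)
    (hG : ¬ (SimpleGraph.fromRel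
        (fun i j : {i // i ∈ τ} =>
          ((⋂ k ∈ σ, U k) ∩ U i.1 ∩ U j.1).Nonempty)).Preconnected) :
    ¬ IsPreconnected (⋂ k ∈ σ, U k) := by
  intro hpre
  set S : Set X := ⋂ k ∈ σ, U k with hS
  set G := SimpleGraph.fromRel
      (fun i j : {i // i ∈ τ} => (S ∩ U i.1 ∩ U j.1).Nonempty) with hGdef
  rw [SimpleGraph.Preconnected] at hG
  push_neg at hG
  obtain ⟨i, j, hij⟩ := hG
  set A : Set {i // i ∈ τ} := {k | G.Reachable i k} with hA
  have hV1 : IsOpen (⋃ k ∈ A, U k.1) := isOpen_biUnion fun k _ => hopen _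
  have hV2 : IsOpen (⋃ k ∈ Aᶜ, U k.1) := isOpen_biUnion fun k _ => hopen _
  have hsub : S ⊆ (⋃ k ∈ A, U k.1) ∪ (⋃ k ∈ Aᶜ, U k.1) := by
    intro x hx
    obtain ⟨t, htτ, hxt⟩ := Set.mem_iUnion₂.mp (hcov hx)
    by_cases h : (⟨t, htτ⟩ : {i // i ∈ τ}) ∈ A
    · exact Or.inl (Set.mem_biUnion h hxt)
    · exact Or.inr (Set.mem_biUnion h hxt)
  have h1 : (S ∩ ⋃ k ∈ A, U k.1).Nonempty := by
    obtain ⟨x, hxS, hxi⟩ := hne i.1 i.2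
    exact ⟨x, hxS, Set.mem_biUnion (SimpleGraph.Reachable.refl i) hxi⟩
  have h2 : (S ∩ ⋃ k ∈ Aᶜ, U k.1).Nonempty := by
    obtain ⟨x, hxS, hxj⟩ := hne j.1 j.2
    exact ⟨x, hxS, Set.mem_biUnion hij hxj⟩
  obtain ⟨x, hxS, hx1, hx2⟩ := hpre _ _ hV1 hV2 hsub h1 h2
  obtain ⟨a, haA, hxa⟩ := Set.mem_iUnion₂.mp hx1
  obtain ⟨b, hbA, hxb⟩ := Set.mem_iUnion₂.mp hx2
  apply hbA
  rcases eq_or_ne a b with rfl | hab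
  · exact haA
  · have hadj : G.Adj a b := by
      rw [hGdef, SimpleGraph.fromRel_adj]
      exact ⟨hab, Or.inl ⟨x, ⟨hxS, hxa⟩, hxb⟩⟩
    exact haA.trans hadj.reachable
end

section
/- Let C be a code on [n] such that for every receptive field relationship it suffices to check singletons: precisely, suppose for every σ ∈ Δ(C) \ C there exists i ∉ σ with σ ∪ {i} ∈ Δ(C) and such that every codeword containing σ also contains i. Then C is intersection-complete: for all ω₁, ω₂ ∈ C, ω₁ ∩ ω₂ ∈ C. -/
/-- The simplicial complex Δ(C) of a code C. -/
def codeComplex (n : ℕ) (C : Set (Finset (Fin n))) : Set (Finset (Fin n)) :=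
  {σ | ∃ c ∈ C, σ ⊆ c}

/-- If every missing face σ ∈ Δ(C) \ C is covered by a single neuron i
(i ∉ σ, σ ∪ {i} ∈ Δ(C), and every codeword containing σ contains i), then C is
intersection-complete. -/
theorem stmt12 (n : ℕ) (C : Set (Finset (Fin n)))
    (h0 : (∅ : Finset (Fin n)) ∈ C)
    (h : ∀ σ ∈ codeComplex n C, σ ∉ C → ∃ i ∉ σ,
        σ ∪ {i} ∈ codeComplex n C ∧ ∀ c ∈ C, σ ⊆ c → i ∈ c) :
    ∀ ω₁ ∈ C, ∀ ω₂ ∈ C, ω₁ ∩ ω₂ ∈ C := by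
  intro ω₁ h₁ ω₂ h₂
  by_contra hσ
  obtain ⟨i, hi, _, hcov⟩ := h (ω₁ ∩ ω₂) ⟨ω₁, h₁, Finset.inter_subset_left⟩ hσ
  exact hi (Finset.mem_inter.mpr
    ⟨hcov ω₁ h₁ Finset.inter_subset_left, hcov ω₂ h₂ Finset.inter_subset_right⟩)
end

section
/- Conversely, if C is an intersection-complete code, then for every σ ∈ Δ(C) \ C there exists i ∉ σ such that every codeword of C containing σ also contains i. -/
/-- If C is intersection-complete, then for every σ ∈ Δ(C) \ C there is i ∉ σ
such that every codeword containing σ also contains i. -/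
theorem stmt13 (n : ℕ) (C : Set (Finset (Fin n)))
    (h0 : (∅ : Finset (Fin n)) ∈ C)
    (hC : ∀ ω₁ ∈ C, ∀ ω₂ ∈ C, ω₁ ∩ ω₂ ∈ C)
    (σ : Finset (Fin n)) (hσ : σ ∈ codeComplex n C) (hσC : σ ∉ C) :
    ∃ i ∉ σ, ∀ c ∈ C, σ ⊆ c → i ∈ c := by
  classical
  obtain ⟨c₀, hc₀C, hc₀⟩ := hσ
  set S : Set (Finset (Fin n)) := {c | c ∈ C ∧ σ ⊆ c} with hS
  have hSfin : S.Finite := Set.Finite.subset (Set.finite_univ) (by simp)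
  set T : Finset (Finset (Fin n)) := hSfin.toFinset with hT
  have hTne : T.Nonempty := ⟨c₀, by simp [hT, hS, hc₀C, hc₀]⟩
  set m : Finset (Fin n) := T.inf' hTne id with hm
  have hmem : ∀ c ∈ T, c ∈ C ∧ σ ⊆ c := by
    intro c hc
    simpa [hT, hS] using hc
  have hmC : m ∈ C := by
    apply Finset.inf'_mem C
    · intro x hx y hy
      have := hC x hx y hy
      simpa [Finset.inf_eq_inter] using this
    · intro c hc; exact (hmem c hc).1
  have hσm : σ ⊆ m :=
    Finset.le_inf' hTne id fun c hc => (hmem c hc).2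
  have hne : m ≠ σ := fun h => hσC (h ▸ hmC)
  have : ∃ i, i ∈ m ∧ i ∉ σ := by
    by_contra h
    push_neg at h
    exact hne (Finset.Subset.antisymm (fun i hi => h i hi) hσm)
  obtain ⟨i, him, hiσ⟩ := this
  refine ⟨i, hiσ, fun c hcC hsc => ?_⟩
  have hcT : c ∈ T := by simp [hT, hS, hcC, hsc]
  exact (Finset.inf'_le id hcT) him
end

section
/- Let C = C(𝒰) be the code of a cover by sets U₁,…,U_n. For σ, τ ⊆ [n] disjoint, the containment U_σ ⊆ ∪_{i∈τ} U_i holds if and only if every codeword c ∈ C with σ ⊆ c satisfies c ∩ τ ≠ ∅. -/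
open scoped Classical in
/-- The code of the cover U₁, …, U_n. -/
noncomputable def coverCode (n : ℕ) {X : Type*} (U : Fin n → Set X) :
    Set (Finset (Fin n)) :=
  {σ | ((⋂ i ∈ σ, U i) \ ⋃ j ∈ σᶜ, U j).Nonempty}

/-- Type 2 receptive-field correspondence: U_σ ⊆ ∪_{i∈τ} U_i iff every codeword
containing σ meets τ. -/
theorem stmt17 (n : ℕ) {X : Type*} (U : Fin n → Set X)
    (σ τ : Finset (Fin n)) (hdisj : Disjoint σ τ)
    (hproper : (⋃ i, U i) ≠ Set.univ) :
    ((⋂ i ∈ σ, U i) ⊆ ⋃ i ∈ τ, U i) ↔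
      ∀ c ∈ coverCode n U, σ ⊆ c → (c ∩ τ).Nonempty := by
  classical
  constructor
  · intro h c hc hσc
    obtain ⟨x, hx1, hx2⟩ := hc
    have hxσ : x ∈ ⋂ i ∈ σ, U i := by
      simp only [Set.mem_iInter] at hx1 ⊢
      intro i hi
      exact hx1 i (hσc hi)
    have := h hxσ
    simp only [Set.mem_iUnion] at this
    obtain ⟨i, hiτ, hxi⟩ := this
    refine ⟨i, Finset.mem_inter.mpr ⟨?_, hiτ⟩⟩
    by_contra hic
    exact hx2 (Set.mem_iUnion₂.mpr ⟨i, Finset.mem_compl.mpr hic, hxi⟩)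
  · intro h x hx
    set c : Finset (Fin n) := Finset.univ.filter (fun i => x ∈ U i) with hcdef
    have hcmem : c ∈ coverCode n U := by
      refine ⟨x, ?_, ?_⟩
      · simp only [Set.mem_iInter]
        intro i hi
        exact (Finset.mem_filter.mp hi).2
      · intro hmem
        simp only [Set.mem_iUnion] at hmem
        obtain ⟨j, hj, hxj⟩ := hmem
        exact (Finset.mem_compl.mp hj) (Finset.mem_filter.mpr ⟨Finset.mem_univ _, hxj⟩)
    have hσc : σ ⊆ c := by
      intro i hi
      simp only [Set.mem_iInter] at hx
      exact Finset.mem_filter.mpr ⟨Finset.mem_univ _, hx i hi⟩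
    obtain ⟨i, hi⟩ := h c hcmem hσc
    rw [Finset.mem_inter] at hi
    exact Set.mem_iUnion₂.mpr ⟨i, hi.2, (Finset.mem_filter.mp hi.1).2⟩
end
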